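/- Let G = (V,E) be a graph on n vertices and let h = n - 2⌈βn⌉ for some β with 0 < β < 1/2. If G contains no path on more than h vertices, then there exist disjoint vertex sets U and W, each of size at least ⌈βn⌉, with no edges between U and W. -/

import Mathlib

open Finset

lemma chain_toWalk {V : Type*} (G : SimpleGraph V) :
    ∀ (l : List V) (x : V), List.Chain' G.Adj (x :: l) →
      ∃ (y : V) (w : G.Walk x y), w.support = x :: l := by
  intro l
  induction l with
  | nil => intro x _; exact ⟨x, SimpleGraph.Walk.nil, rfl⟩
  | cons a l ih =>
    intro x hc
    have hadj : G.Adj x a := (List.isChain_cons_cons.mp hc).1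
    obtain ⟨y, w, hw⟩ := ih a (List.isChain_cons_cons.mp hc).2
    exact ⟨y, SimpleGraph.Walk.cons hadj w, by simp [hw]⟩

lemma path_len_bound {V : Type*} (G : SimpleGraph V) (h : ℕ)
    (hpath : ∀ (u v : V) (p : G.Walk u v), p.IsPath → p.support.length ≤ h)
    (P : List V) (hc : List.Chain' G.Adj P) (hnd : P.Nodup) :
    P.length ≤ h := by
  match P with
  | [] => simp
  | x :: rest =>
    obtain ⟨y, w, hw⟩ := chain_toWalk G rest x hc
    have hp : w.IsPath := SimpleGraph.Walk.isPath_def w |>.mpr (hw ▸ hnd)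
    have := hpath x y w hp
    rw [hw] at this
    simpa using this

lemma dfs_main {V : Type*} [Fintype V] [DecidableEq V] (G : SimpleGraph V)
    (b h n : ℕ) (hbn : h + 2 * b = n) (hn : n = Fintype.card V)
    (hpath : ∀ (u v : V) (p : G.Walk u v), p.IsPath → p.support.length ≤ h) :
    ∀ (m : ℕ) (U W : Finset V) (P : List V),
      2 * U.card + P.length ≤ m → b ≤ U.card →
      List.Chain' G.Adj P → P.Nodup →
      (∀ v ∈ P, v ∉ U) → (∀ v ∈ P, v ∉ W) →
      Disjoint U W → (∀ u ∈ U, ∀ w ∈ W, ¬G.Adj u w) →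
      U.card + W.card + P.length = n →
      ∃ U' W' : Finset V, Disjoint U' W' ∧ b ≤ U'.card ∧ b ≤ W'.card ∧
        ∀ u ∈ U', ∀ w ∈ W', ¬G.Adj u w := by
  classical
  intro m
  induction m with
  | zero =>
    intro U W P hm hb _ _ _ _ hdisj hUW hcard
    -- U.card = 0, so b = 0
    have hU0 : U.card = 0 := by omega
    have hb0 : b = 0 := by omega
    exact ⟨U, W, hdisj, hb ,by omega, hUW⟩
  | succ m ih =>
    intro U W P hm hb hchain hnd hPU hPW hdisj hUW hcard
    rcases eq_or_lt_of_le hb with hbe | hbl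
    · -- U.card = b : done
      have hPh : P.length ≤ h := path_len_bound G h hpath P hchain hnd
      exact ⟨U, W, hdisj, hb, by omega, hUW⟩
    · match P with
      | [] =>
        -- pick u ∈ U
        have hUne : U.Nonempty := Finset.card_pos.mp (by omega)
        obtain ⟨u, hu⟩ := hUne
        have hcardU : (U.erase u).card = U.card - 1 := Finset.card_erase_of_mem hu
        refine ih (U.erase u) W [u] ?_ ?_ ?_ ?_ ?_ ?_ ?_ ?_ ?_
        · simp at hm ⊢; omega
        · omega
        · exact List.isChain_singleton _
        · simp
        · intro v hv; simp at hv; subst hv; exact Finset.notMem_erase _ _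
        · intro v hv; simp at hv; subst hv; exact Finset.disjoint_left.mp hdisj hu
        · exact Finset.disjoint_of_subset_left (Finset.erase_subset u U) hdisj
        · intro a ha w hw; exact hUW a (Finset.mem_of_mem_erase ha) w hw
        · have h1 : 1 ≤ U.card := Finset.card_pos.mpr ⟨u, hu⟩
          simp only [List.length_cons, List.length_nil] at hcard ⊢
          omega
      | x :: rest =>
        by_cases hx : ∃ u ∈ U, G.Adj x u
        · -- extend
          obtain ⟨u, hu, hadj⟩ := hx
          have hcardU : (U.erase u).card = U.card - 1 := Finset.card_erase_of_mem hu
          have huP : u ∉ x :: rest := fun hmem => hPU u hmem hu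
          refine ih (U.erase u) W (u :: x :: rest) ?_ ?_ ?_ ?_ ?_ ?_ ?_ ?_ ?_
          · simp at hm ⊢; omega
          · omega
          · exact List.isChain_cons_cons.mpr ⟨hadj.symm, hchain⟩
          · exact List.nodup_cons.mpr ⟨huP, hnd⟩
          · intro v hv
            rcases List.mem_cons.mp hv with rfl | hv
            · exact Finset.notMem_erase v U
            · exact fun hmem => hPU v hv (Finset.mem_of_mem_erase hmem)
          · intro v hv
            rcases List.mem_cons.mp hv with rfl | hv
            · exact Finset.disjoint_left.mp hdisj hu
            · exact hPW v hv
          · exact Finset.disjoint_of_subset_left (Finset.erase_subset u U) hdisj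
          · intro a ha w hw; exact hUW a (Finset.mem_of_mem_erase ha) w hw
          · simp at hcard ⊢; omega
        · -- pop x into W
          push_neg at hx
          have hxW : x ∉ W := hPW x List.mem_cons_self
          have hxU : x ∉ U := hPU x List.mem_cons_self
          refine ih U (insert x W) rest ?_ ?_ ?_ ?_ ?_ ?_ ?_ ?_ ?_
          · simp at hm ⊢; omega
          · omega
          · exact List.IsChain.tail hchain
          · exact (List.nodup_cons.mp hnd).2
          · intro v hv; exact hPU v (List.mem_cons_of_mem x hv)
          · intro v hv hmem
            rcases Finset.mem_insert.mp hmem with rfl | hmem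
            · exact (List.nodup_cons.mp hnd).1 hv
            · exact hPW v (List.mem_cons_of_mem x hv) hmem
          · refine Finset.disjoint_left.mpr ?_
            intro a ha hmem
            rcases Finset.mem_insert.mp hmem with rfl | hmem
            · exact hxU ha
            · exact Finset.disjoint_left.mp hdisj ha hmem
          · intro a ha w hw
            rcases Finset.mem_insert.mp hw with rfl | hw
            · exact fun hadj => hx a ha hadj.symm
            · exact hUW a ha w hw
          · rw [Finset.card_insert_of_notMem hxW]; simp at hcard ⊢; omega

theorem stmt_17 {V : Type*} [Fintype V] [DecidableEq V] (G : SimpleGraph V)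
    (β : ℝ) (hβ : 0 < β) (hβ' : β < 1 / 2)
    (n : ℕ) (hn : n = Fintype.card V)
    (h : ℕ) (hh : h = n - 2 * ⌈β * n⌉₊)
    (hpath : ∀ (u v : V) (p : G.Walk u v), p.IsPath → p.support.length ≤ h) :
    ∃ U W : Finset V, Disjoint U W ∧
      ⌈β * n⌉₊ ≤ U.card ∧ ⌈β * n⌉₊ ≤ W.card ∧
      ∀ u ∈ U, ∀ w ∈ W, ¬G.Adj u w := by
  classical
  set b := ⌈β * n⌉₊ with hbdef
  rcases Nat.eq_zero_or_pos n with hn0 | hnpos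
  · have hb0 : b = 0 := by
      simp [hbdef, hn0]
    exact ⟨∅, ∅, Finset.disjoint_empty_left ∅, by simp [hb0], by simp [hb0], by simp⟩
  · -- n > 0: there is a vertex
    have hVne : Nonempty V := by
      rw [← Fintype.card_pos_iff]; omega
    obtain ⟨v⟩ := hVne
    have h1 : 1 ≤ h := by
      have := hpath v v SimpleGraph.Walk.nil (SimpleGraph.Walk.IsPath.nil)
      simpa using this
    have hbn : h + 2 * b = n := by omega
    refine dfs_main G b h n hbn hn hpath (2 * n) Finset.univ ∅ [] ?_ ?_ ?_ ?_ ?_ ?_ ?_ ?_ ?_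
    · simp [← hn]
    · rw [Finset.card_univ, ← hn]; omega
    · exact List.isChain_nil
    · simp
    · simp
    · simp
    · simp
    · simp
    · simp [← hn]
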